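/- Let q > 0, r > 0, and set λₖ⁺ = the unique λ ∈ [0, q) with λ = λₖ(λqr/(q−λ)), where λₖ(μ) is the k-th eigenvalue of the Robin Laplacian (non-increasing continuous in μ, λₖ(μ) → λₖ^D as μ → −∞ with λₖ^D → ∞ as k → ∞). Then the sequence (λₖ⁺) is non-decreasing and λₖ⁺ → q as k → ∞. -/

import Mathlib

open MeasureTheory

/-- `v ∈ H¹(Ω)`. -/
def MemH1 {n : ℕ} (F : Set (EuclideanSpace ℝ (Fin n)))
    (v : EuclideanSpace ℝ (Fin n) → ℝ) : Prop :=
  MemLp v 2 (volume.restrict F) ∧ MemLp (fun x => ‖fderiv ℝ v x‖) 2 (volume.restrict F)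

/-- Rayleigh quotient of the Robin form `η^μ[u,u] = ∫_Ω |∇u|² − μ ∫_Γ |u|² ds`. -/
noncomputable def robinRayleigh (m : ℕ) (Ω Γ : Set (EuclideanSpace ℝ (Fin (m+1))))
    (μ : ℝ) (u : EuclideanSpace ℝ (Fin (m+1)) → ℝ) : ℝ :=
  ((∫ x in Ω, ‖fderiv ℝ u x‖^2) - μ * ∫ x in Γ, (u x)^2 ∂(μH[(m : ℝ)])) / ∫ x in Ω, (u x)^2

/-- The `k`-th (counted from `0`, with multiplicity) min-max eigenvalue of the Robin
Laplacian `A^μ`: infimum over `(k+1)`-dimensional subspaces `L` of the form domain `Q`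
(representing `H¹(Ω)`) of the supremum of the Rayleigh quotient over `L \ {0}`. -/
noncomputable def robinEig (m : ℕ) (Ω Γ : Set (EuclideanSpace ℝ (Fin (m+1))))
    (Q : Submodule ℝ (EuclideanSpace ℝ (Fin (m+1)) → ℝ)) (μ : ℝ) (k : ℕ) : ℝ :=
  sInf {r : ℝ | ∃ L : Submodule ℝ (EuclideanSpace ℝ (Fin (m+1)) → ℝ), L ≤ Q ∧
    Module.finrank ℝ L = k + 1 ∧
    r = sSup {s : ℝ | ∃ u, u ∈ L ∧ u ≠ 0 ∧ s = robinRayleigh m Ω Γ μ u}}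

/-- Let `q, r > 0` and `λₖ⁺ ∈ [0,q)` be the unique solution of
`λ = λₖ(λqr/(q−λ))`, where `λₖ(μ)` is the `k`-th Robin eigenvalue (continuous and
non-increasing in `μ`, non-decreasing in `k`, converging as `μ → −∞` to the Dirichlet
eigenvalue `λₖ^D` with `λₖ^D → ∞`, and `λₖ(μ) → ∞` as `k → ∞` for each fixed `μ`).
Then `(λₖ⁺)` is non-decreasing and `λₖ⁺ → q` as `k → ∞`. -/
theorem stmt15 (m : ℕ) (hm : 1 ≤ m) (Ω Γ : Set (EuclideanSpace ℝ (Fin (m+1))))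
    (hΩo : IsOpen Ω) (hΩb : Bornology.IsBounded Ω) (hΩc : IsConnected Ω)
    (hΓ : Γ ⊆ frontier Ω) (hΓpos : μH[(m : ℝ)] Γ ≠ 0)
    (Q : Submodule ℝ (EuclideanSpace ℝ (Fin (m+1)) → ℝ))
    (hQ : ∀ u ∈ Q, MemH1 Ω u)
    (q r : ℝ) (hq : 0 < q) (hr : 0 < r)
    (hcont : ∀ k, Continuous (fun μ => robinEig m Ω Γ Q μ k))
    (hanti : ∀ k, Antitone (fun μ => robinEig m Ω Γ Q μ k))
    (hmonok : ∀ k μ, robinEig m Ω Γ Q μ k ≤ robinEig m Ω Γ Q μ (k+1))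
    (lamD : ℕ → ℝ)
    (hDlim : ∀ k, Filter.Tendsto (fun μ => robinEig m Ω Γ Q μ k) Filter.atBot
      (nhds (lamD k)))
    (hDinf : Filter.Tendsto lamD Filter.atTop Filter.atTop)
    (hkinf : ∀ μ, Filter.Tendsto (fun k => robinEig m Ω Γ Q μ k) Filter.atTop
      Filter.atTop)
    (lamp : ℕ → ℝ)
    (hlamp : ∀ k, lamp k ∈ Set.Ico 0 q ∧
      robinEig m Ω Γ Q (lamp k * q * r / (q - lamp k)) k = lamp k)
    (huniq : ∀ k l, l ∈ Set.Ico 0 q →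
      robinEig m Ω Γ Q (l * q * r / (q - l)) k = l → l = lamp k) :
    Monotone lamp ∧ Filter.Tendsto lamp Filter.atTop (nhds q) := by
  have hg : ∀ a b : ℝ, 0 ≤ a → a ≤ b → b < q →
      a * q * r / (q - a) ≤ b * q * r / (q - b) := by
    intro a b ha hab hbq
    have h1 : (0:ℝ) < q - b := by linarith
    exact div_le_div₀ (mul_nonneg (mul_nonneg (ha.trans hab) hq.le) hr.le)
      (mul_le_mul_of_nonneg_right (mul_le_mul_of_nonneg_right hab hq.le) hr.le)
      h1 (by linarith)
  constructor
  · apply monotone_nat_of_le_succ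
    intro k
    by_contra h
    push_neg at h
    obtain ⟨⟨h0k, hkq⟩, heq⟩ := hlamp k
    obtain ⟨⟨h0k1, hk1q⟩, heq1⟩ := hlamp (k+1)
    have hμ := hg _ _ h0k1 h.le hkq
    have h2 := hanti (k+1) hμ
    have h3 := hmonok k (lamp k * q * r / (q - lamp k))
    simp only at h2
    rw [heq1] at h2
    rw [heq] at h3
    linarith
  · rw [tendsto_order]
    constructor
    · intro a ha
      set a' := max a 0 with ha'
      have h0a' : 0 ≤ a' := le_max_right _ _
      have ha'q : a' < q := max_lt ha hq
      have := (hkinf (a' * q * r / (q - a'))).eventually_gt_atTop q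
      filter_upwards [this] with k hk
      obtain ⟨⟨h0k, hkq⟩, heq⟩ := hlamp k
      by_contra hcon
      push_neg at hcon
      have hle : lamp k ≤ a' := le_trans hcon (le_max_left _ _)
      have hμ := hg _ _ h0k hle ha'q
      have h2 := hanti k hμ
      simp only at h2
      rw [heq] at h2
      linarith
    · intro b hb
      filter_upwards with k
      exact lt_trans (hlamp k).1.2 hb
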